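/- Let m ≥ 3 be a natural number and L > 0. Let S be a subset of the index set {1, 2, …, m−1} (i.e. a set of indices of Fin m not containing the smallest index 0) with 2·|S| ≤ m. Then the function t ↦ (∏_{l ∈ S} t_l)^{-1} · (t_0 + t_1 + ⋯ + t_{m-1})^{-1} is Lebesgue integrable on the ordered simplex {t ∈ ℝᵐ : 0 ≤ t_0 ≤ t_1 ≤ ⋯ ≤ t_{m-1} ≤ L}. -/

import Mathlib

open MeasureTheory Finset

/-- The `i`-th element (0-indexed) of a finset of `Fin m` avoiding `0` has value at least `i+1`. -/
lemma orderEmbOfFin_val_lower {m k : ℕ} (S : Finset (Fin m)) (h : S.card = k)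
    (h0 : ∀ x ∈ S, (x : Fin m).val ≠ 0) :
    ∀ n (hn : n < k), n + 1 ≤ (S.orderEmbOfFin h ⟨n, hn⟩).val := by
  intro n
  induction n with
  | zero =>
    intro hn
    have hmem := S.orderEmbOfFin_mem h ⟨0, hn⟩
    have := h0 _ hmem
    omega
  | succ n ih =>
    intro hn
    have hlt : (⟨n, by omega⟩ : Fin k) < ⟨n + 1, hn⟩ := by
      simp [Fin.lt_def]
    have h2 : (S.orderEmbOfFin h ⟨n, by omega⟩) < (S.orderEmbOfFin h ⟨n + 1, hn⟩) :=
      (S.orderEmbOfFin h).strictMono hlt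
    have h3 := ih (by omega)
    have h4 : (S.orderEmbOfFin h ⟨n, by omega⟩).val < (S.orderEmbOfFin h ⟨n + 1, hn⟩).val := h2
    omega

/-- Appendix B integrability estimate: for `m ≥ 3` and a set `S` of indices not containing
the smallest index `0` with `2·|S| ≤ m`, the function
`t ↦ (∏_{l∈S} t_l)⁻¹ · (∑ᵢ tᵢ)⁻¹` is Lebesgue integrable on the ordered simplex
`{0 ≤ t₀ ≤ t₁ ≤ ⋯ ≤ t_{m-1} ≤ L}`. -/
theorem integrable_wheel_anomaly_time_integral (m : ℕ) (hm : 3 ≤ m) (L : ℝ) (hL : 0 < L)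
    (S : Finset (Fin m)) (hS0 : (⟨0, by omega⟩ : Fin m) ∉ S) (hScard : 2 * S.card ≤ m) :
    IntegrableOn
      (fun t : Fin m → ℝ => (∏ l ∈ S, t l)⁻¹ * (∑ i, t i)⁻¹)
      {t : Fin m → ℝ | 0 ≤ t (⟨0, by omega⟩ : Fin m) ∧ (∀ i j, i ≤ j → t i ≤ t j) ∧
        t (⟨m - 1, by omega⟩ : Fin m) ≤ L} := by
  have hm0 : 0 < m := by omega
  set k := S.card with hkdef
  have hcard : S.card = k := rfl
  have hkm : k + 1 < m := by omega
  set c : ℝ := (k : ℝ) / ((k : ℝ) + 1) with hc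
  have hk1pos : (0 : ℝ) < (k : ℝ) + 1 := by positivity
  have hcnonneg : 0 ≤ c := by positivity
  set q : Fin m → ℝ := fun j => (if j.val ≤ k then c else 0) + 1 / m with hq
  have hq_lt_one : ∀ j, q j < 1 := by
    intro j
    have h1 : (1 : ℝ) / m < 1 / ((k : ℝ) + 1) := by
      apply one_div_lt_one_div_of_lt hk1pos
      exact_mod_cast hkm
    have h2 : c + 1 / ((k : ℝ) + 1) = 1 := by
      rw [hc, ← add_div, div_self hk1pos.ne']
    simp only [hq]
    by_cases hjk : j.val ≤ k
    · simp only [hjk, if_true]; linarith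
    · simp only [hjk, if_false]
      have : (1 : ℝ) / m ≤ 1 / 3 := by
        apply one_div_le_one_div_of_le <;> [norm_num; exact_mod_cast hm]
      linarith
  have hq_nonneg : ∀ j, 0 ≤ q j := by
    intro j
    have h1 : (0:ℝ) ≤ 1 / m := by positivity
    simp only [hq]
    by_cases hjk : j.val ≤ k
    · simp only [hjk, if_true]
      exact add_nonneg hcnonneg h1
    · simp only [hjk, if_false, zero_add]
      exact h1
  -- the dominating function
  set F : Fin m → ℝ → ℝ := fun j => Set.indicator (Set.Ioc 0 L) (fun x => x ^ (-(q j))) with hF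
  have hFint : ∀ j, Integrable (F j) := by
    intro j
    apply IntegrableOn.integrable_indicator _ measurableSet_Ioc
    have h1 : IntervalIntegrable (fun x : ℝ => x ^ (-(q j))) volume 0 L :=
      intervalIntegral.intervalIntegrable_rpow' (by linarith [hq_lt_one j])
    exact (intervalIntegrable_iff_integrableOn_Ioc_of_le hL.le).mp h1
  set G : (Fin m → ℝ) → ℝ := fun t => ∏ j, F j (t j) with hG
  have hGint : Integrable G := Integrable.fintype_prod (𝕜 := ℝ) hFint
  -- measurability of the region
  set E : Set (Fin m → ℝ) :=
    {t : Fin m → ℝ | 0 ≤ t (⟨0, by omega⟩ : Fin m) ∧ (∀ i j, i ≤ j → t i ≤ t j) ∧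
        t (⟨m - 1, by omega⟩ : Fin m) ≤ L} with hEdef
  have hE : MeasurableSet E := by
    have : E = {t : Fin m → ℝ | 0 ≤ t (⟨0, by omega⟩ : Fin m)} ∩
        ((⋂ i, ⋂ j, {t : Fin m → ℝ | i ≤ j → t i ≤ t j}) ∩
          {t : Fin m → ℝ | t (⟨m - 1, by omega⟩ : Fin m) ≤ L}) := by
      ext t
      simp only [hEdef, Set.mem_setOf_eq, Set.mem_inter_iff, Set.mem_iInter]
    rw [this]
    refine MeasurableSet.inter ?_ (MeasurableSet.inter ?_ ?_)
    · exact measurableSet_le measurable_const (measurable_pi_apply _)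
    · refine MeasurableSet.iInter fun i => MeasurableSet.iInter fun j => ?_
      by_cases hij : i ≤ j
      · simp only [hij, forall_true_left]
        exact measurableSet_le (measurable_pi_apply _) (measurable_pi_apply _)
      · simp only [hij]
        convert MeasurableSet.univ
        ext t; simp [hij]
    · exact measurableSet_le (measurable_pi_apply _) measurable_const
  -- a.e. all coordinates nonzero
  have hnull : ∀ᵐ t : Fin m → ℝ ∂volume, ∀ j, t j ≠ 0 := by
    rw [ae_all_iff]
    intro j
    rw [ae_iff]
    simp only [not_not]
    have hsub : {t : Fin m → ℝ | t j = 0} ⊆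
        Set.pi Set.univ (fun i => if i = j then ({0} : Set ℝ) else Set.univ) := by
      intro t ht
      intro i _
      by_cases hij : i = j
      · subst hij; simpa using ht
      · simp [hij]
    apply measure_mono_null hsub
    rw [volume_pi_pi]
    apply Finset.prod_eq_zero (Finset.mem_univ j)
    simp
  -- pointwise bound
  have key : ∀ t ∈ E, (∀ j, t j ≠ 0) →
      ‖(∏ l ∈ S, t l)⁻¹ * (∑ i, t i)⁻¹‖ ≤ G t := by
    intro t ht hne
    rw [hEdef, Set.mem_setOf_eq] at ht
    obtain ⟨h0, hmono, hLt⟩ := ht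
    have hpos : ∀ j, 0 < t j := by
      intro j
      have h1 : (⟨0, by omega⟩ : Fin m) ≤ j := by
        simp [Fin.le_def]
      exact lt_of_le_of_ne (le_trans h0 (hmono _ j h1)) (hne j).symm
    have hle : ∀ j, t j ≤ L := by
      intro j
      have h1 : j ≤ (⟨m - 1, by omega⟩ : Fin m) := by
        simp [Fin.le_def]; omega
      exact le_trans (hmono j _ h1) hLt
    have hGt : G t = ∏ j, (t j) ^ (-(q j)) := by
      apply Finset.prod_congr rfl
      intro j _
      exact Set.indicator_of_mem (Set.mem_Ioc.mpr ⟨hpos j, hle j⟩) _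
    set Q : ℝ := ∏ l ∈ S, t l with hQ
    have hQpos : 0 < Q := Finset.prod_pos fun l _ => hpos l
    set Sg : ℝ := ∑ i, t i with hSg
    have hSgpos : 0 < Sg := Finset.sum_pos (fun i _ => hpos i) ⟨⟨0, by omega⟩, Finset.mem_univ _⟩
    -- rewrite norm
    have hnorm : ‖Q⁻¹ * Sg⁻¹‖ = Q⁻¹ * Sg⁻¹ := by
      rw [Real.norm_eq_abs, abs_of_pos (mul_pos (inv_pos.mpr hQpos) (inv_pos.mpr hSgpos))]
    -- Step 1 : Q⁻¹ ≤ ∏_{j ≤ k} (t j)^(-c)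
    set A : Finset (Fin m) := Finset.univ.filter (fun j => j.val ≤ k) with hA
    set P : ℝ := ∏ j ∈ A, t j with hP
    have hPpos : 0 < P := Finset.prod_pos fun l _ => hpos l
    have hAmap : A = Finset.univ.map (Fin.castLEEmb (by omega : k + 1 ≤ m)) := by
      ext j
      simp only [hA, Finset.mem_filter, Finset.mem_univ, true_and, Finset.mem_map]
      constructor
      · intro hj
        exact ⟨⟨j.val, by omega⟩, Fin.ext rfl⟩
      · rintro ⟨i, _, rfl⟩
        have hi := i.isLt
        show i.val ≤ k
        omega
    set R : ℝ := ∏ i : Fin k, t (Fin.castLE (by omega : k + 1 ≤ m) i.succ) with hR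
    have hPR : P = t (⟨0, by omega⟩ : Fin m) * R := by
      rw [hP, hAmap, Finset.prod_map]
      rw [Fin.prod_univ_succ]
      congr 1
    have hRpos : 0 < R := Finset.prod_pos fun l _ => hpos _
    -- R ≤ Q via order embedding
    have hRQ : R ≤ Q := by
      have hSmap : S = Finset.univ.map (S.orderEmbOfFin hcard).toEmbedding := by
        ext x
        simp only [Finset.mem_map, Finset.mem_univ, true_and, RelEmbedding.coe_toEmbedding]
        constructor
        · intro hx
          have : x ∈ Set.range (S.orderEmbOfFin hcard) := by
            rw [Finset.range_orderEmbOfFin]; exact hx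
          exact this
        · rintro ⟨i, rfl⟩
          exact S.orderEmbOfFin_mem hcard i
      rw [hQ, hSmap, Finset.prod_map]
      apply Finset.prod_le_prod
      · intro i _; exact (hpos _).le
      · intro i _
        apply hmono
        simp only [Fin.le_def]
        have := orderEmbOfFin_val_lower S hcard
          (fun x hx => by
            intro hx0
            apply hS0
            have : x = (⟨0, by omega⟩ : Fin m) := Fin.ext hx0
            rwa [this] at hx) i.val i.isLt
        simpa using this
    have ht0R : (t (⟨0, by omega⟩ : Fin m)) ^ k ≤ R := by
      rw [hR]
      calc (t (⟨0, by omega⟩ : Fin m)) ^ k = ∏ _i : Fin k, t (⟨0, by omega⟩ : Fin m) := by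
            simp
        _ ≤ ∏ i : Fin k, t (Fin.castLE (by omega : k + 1 ≤ m) i.succ) := by
            apply Finset.prod_le_prod
            · intro i _; exact h0
            · intro i _
              apply hmono
              simp [Fin.le_def]
    have hPk : P ^ k ≤ Q ^ (k + 1) := by
      have h1 : P ^ k = (t (⟨0, by omega⟩ : Fin m)) ^ k * R ^ k := by
        rw [hPR, mul_pow]
      have h2 : (t (⟨0, by omega⟩ : Fin m)) ^ k * R ^ k ≤ R * R ^ k := by
        apply mul_le_mul_of_nonneg_right ht0R (pow_nonneg hRpos.le k)
      have h3 : R * R ^ k = R ^ (k + 1) := by ring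
      have h4 : R ^ (k + 1) ≤ Q ^ (k + 1) := pow_le_pow_left₀ hRpos.le hRQ (k + 1)
      linarith
    have hPQ : P ^ c ≤ Q := by
      have e1 : P ^ c = (P ^ (k : ℕ)) ^ (((k : ℝ) + 1)⁻¹) := by
        rw [← Real.rpow_natCast P k, ← Real.rpow_mul hPpos.le]
        congr 1
      have e2 : (Q ^ (k + 1 : ℕ)) ^ (((k : ℝ) + 1)⁻¹) = Q := by
        rw [← Real.rpow_natCast Q (k + 1), ← Real.rpow_mul hQpos.le]
        push_cast
        rw [mul_inv_cancel₀ (by positivity), Real.rpow_one]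
      calc P ^ c = (P ^ (k : ℕ)) ^ (((k : ℝ) + 1)⁻¹) := e1
        _ ≤ (Q ^ (k + 1 : ℕ)) ^ (((k : ℝ) + 1)⁻¹) := by
            apply Real.rpow_le_rpow (pow_nonneg hPpos.le _) hPk (by positivity)
        _ = Q := e2
    have step1 : Q⁻¹ ≤ ∏ j ∈ A, (t j) ^ (-c) := by
      have h1 : Q⁻¹ ≤ (P ^ c)⁻¹ :=
        inv_anti₀ (Real.rpow_pos_of_pos hPpos c) hPQ
      have h2 : (P ^ c)⁻¹ = P ^ (-c) := (Real.rpow_neg hPpos.le c).symm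
      have h3 : P ^ (-c) = ∏ j ∈ A, (t j) ^ (-c) :=
        (Real.finset_prod_rpow A _ (fun j _ => (hpos j).le) (-c)).symm
      calc Q⁻¹ ≤ (P ^ c)⁻¹ := h1
        _ = P ^ (-c) := h2
        _ = ∏ j ∈ A, (t j) ^ (-c) := h3
    -- Step 2 : Sg⁻¹ ≤ ∏ j, (t j)^(-(1/m))
    set W : ℝ := ∏ j, t j with hW
    have hWpos : 0 < W := Finset.prod_pos fun l _ => hpos l
    have hjlast : ∀ j : Fin m, j ≤ (⟨m - 1, by omega⟩ : Fin m) := by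
      intro j
      have hj := j.isLt
      rw [Fin.le_def]
      exact Nat.le_pred_of_lt hj
    have hWM : W ≤ (t (⟨m - 1, by omega⟩ : Fin m)) ^ m := by
      have h1 : W ≤ ∏ _j : Fin m, t (⟨m - 1, by omega⟩ : Fin m) :=
        Finset.prod_le_prod (fun j _ => (hpos j).le) (fun j _ => hmono j _ (hjlast j))
      simpa using h1
    have hMSg : t (⟨m - 1, by omega⟩ : Fin m) ≤ Sg :=
      Finset.single_le_sum (fun i _ => (hpos i).le) (Finset.mem_univ _)
    have hWSg : W ^ ((1 : ℝ) / m) ≤ Sg := by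
      have hMpos := hpos (⟨m - 1, by omega⟩ : Fin m)
      calc W ^ ((1 : ℝ) / m) ≤ ((t (⟨m - 1, by omega⟩ : Fin m)) ^ m) ^ ((1 : ℝ) / m) :=
            Real.rpow_le_rpow hWpos.le hWM (by positivity)
        _ = t (⟨m - 1, by omega⟩ : Fin m) := by
            rw [← Real.rpow_natCast _ m, ← Real.rpow_mul hMpos.le]
            rw [mul_one_div, div_self (by positivity : (m : ℝ) ≠ 0), Real.rpow_one]
        _ ≤ Sg := hMSg
    have step2 : Sg⁻¹ ≤ ∏ j, (t j) ^ (-(1 / (m : ℝ))) := by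
      have h1 : Sg⁻¹ ≤ (W ^ ((1 : ℝ) / m))⁻¹ :=
        inv_anti₀ (Real.rpow_pos_of_pos hWpos _) hWSg
      have h2 : (W ^ ((1 : ℝ) / m))⁻¹ = W ^ (-(1 / (m : ℝ))) := (Real.rpow_neg hWpos.le _).symm
      have h3 : W ^ (-(1 / (m : ℝ))) = ∏ j, (t j) ^ (-(1 / (m : ℝ))) :=
        (Real.finset_prod_rpow Finset.univ _ (fun j _ => (hpos j).le) _).symm
      calc Sg⁻¹ ≤ (W ^ ((1 : ℝ) / m))⁻¹ := h1
        _ = W ^ (-(1 / (m : ℝ))) := h2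
        _ = ∏ j, (t j) ^ (-(1 / (m : ℝ))) := h3
    -- combine
    have hcomb : (∏ j ∈ A, (t j) ^ (-c)) * (∏ j, (t j) ^ (-(1 / (m : ℝ)))) =
        ∏ j, (t j) ^ (-(q j)) := by
      rw [hA, Finset.prod_filter, ← Finset.prod_mul_distrib]
      apply Finset.prod_congr rfl
      intro j _
      simp only [hq]
      rw [neg_add, Real.rpow_add (hpos j)]
      congr 1
      by_cases hjk : j.val ≤ k
      · simp [hjk]
      · simp [hjk]
    calc ‖Q⁻¹ * Sg⁻¹‖ = Q⁻¹ * Sg⁻¹ := hnorm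
      _ ≤ (∏ j ∈ A, (t j) ^ (-c)) * (∏ j, (t j) ^ (-(1 / (m : ℝ)))) := by
          apply mul_le_mul step1 step2 (inv_pos.mpr hSgpos).le
          exact Finset.prod_nonneg fun j _ => Real.rpow_nonneg (hpos j).le _
      _ = ∏ j, (t j) ^ (-(q j)) := hcomb
      _ = G t := hGt.symm
  -- final assembly
  refine Integrable.mono' (hGint.restrict (s := E)) ?_ ?_
  · apply Measurable.aestronglyMeasurable
    apply Measurable.mul
    · exact (Finset.measurable_prod _ fun l _ => measurable_pi_apply l).inv
    · exact (Finset.measurable_sum _ fun i _ => measurable_pi_apply i).inv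
  · filter_upwards [ae_restrict_mem hE, ae_restrict_of_ae hnull] with t ht htne
    exact key t ht htne
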